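/- Let d ≥ 1 be an integer, p ∈ (d, ∞) and q ∈ (2, ∞) real numbers with d/p + 2/q = 1, T ∈ (0, ∞), and b ∈ L^q([0, T]; L^p(ℝ^d)). Then for every α > 0 there exist Borel measurable functions b_M and b_B on [0, T] × ℝ^d with b = b_M + b_B such that: (i) for every t ∈ [0, T] and every ball B ⊂ ℝ^d of radius ρ, (Vol(B)^{−1} ∫_B |b_M(t, x)|^d dx)^{1/d} ≤ α ρ^{−1}; and (ii) there is a function λ ∈ L^2([0, T]) with |b_B(t, x)| ≤ λ(t) for all (t, x) ∈ [0, T] × ℝ^d. -/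

import Mathlib

open MeasureTheory

/-- Conclusion of Remark 4 (case `p > d`): any `b ∈ L^q([0,T]; L^p(ℝ^d))` with
`d/p + 2/q = 1`, `p ∈ (d,∞)`, `q ∈ (2,∞)`, decomposes, for every `α > 0`, as
`b = b_M + b_B` where `b_M` satisfies the Morrey bound
`(Vol(B)⁻¹ ∫_B |b_M(t,·)|^d)^{1/d} ≤ α ρ⁻¹` on every ball of radius `ρ`, and
`|b_B(t,x)| ≤ λ(t)` for some `λ ∈ L²([0,T])`. -/
theorem critical_drift_decomposition (d : ℕ) (hd : 1 ≤ d) (p q T : ℝ)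
    (hp : (d : ℝ) < p) (hq : 2 < q) (hcrit : (d : ℝ) / p + 2 / q = 1) (hT : 0 < T)
    (b : ℝ → EuclideanSpace ℝ (Fin d) → ℝ)
    (hmeas : Measurable (Function.uncurry b))
    (hLp : ∀ t ∈ Set.Icc (0 : ℝ) T, Integrable (fun x => |b t x| ^ p))
    (hLq : IntegrableOn (fun t => (∫ x, |b t x| ^ p) ^ (q / p)) (Set.Icc 0 T)) :
    ∀ α > (0 : ℝ), ∃ bM bB : ℝ → EuclideanSpace ℝ (Fin d) → ℝ,
      Measurable (Function.uncurry bM) ∧ Measurable (Function.uncurry bB) ∧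
      (∀ t x, b t x = bM t x + bB t x) ∧
      (∀ t ∈ Set.Icc (0 : ℝ) T, ∀ (z : EuclideanSpace ℝ (Fin d)) (ρ : ℝ), 0 < ρ →
        ((volume (Metric.ball z ρ)).toReal⁻¹ *
            ∫ x in Metric.ball z ρ, |bM t x| ^ (d : ℝ)) ^ ((d : ℝ)⁻¹) ≤ α * ρ⁻¹) ∧
      (∃ lam : ℝ → ℝ, Measurable lam ∧
        IntegrableOn (fun t => lam t ^ 2) (Set.Icc 0 T) ∧
        ∀ t ∈ Set.Icc (0 : ℝ) T, ∀ x, |bB t x| ≤ lam t) := by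
  intro α hα
  classical
  have hdpos : (0:ℝ) < (d:ℝ) := by exact_mod_cast hd
  have hppos : (0:ℝ) < p := lt_trans hdpos hp
  have hpd : (0:ℝ) < p - (d:ℝ) := by linarith
  -- the volume of the unit ball
  set c : ℝ := (volume (Metric.ball (0 : EuclideanSpace ℝ (Fin d)) 1)).toReal with hc
  have hc0 : 0 < c := by
    have h1 : 0 < volume (Metric.ball (0 : EuclideanSpace ℝ (Fin d)) 1) :=
      Metric.measure_ball_pos _ _ one_pos
    have h2 : volume (Metric.ball (0 : EuclideanSpace ℝ (Fin d)) 1) < ⊤ :=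
      measure_ball_lt_top
    exact ENNReal.toReal_pos h1.ne' h2.ne
  set A : ℝ := (α ^ d * c)⁻¹ with hA
  have hA0 : 0 < A := by positivity
  set I : ℝ → ℝ := fun t => ∫ x, |b t x| ^ p with hIdef
  have hI0 : ∀ t, 0 ≤ I t := fun t =>
    integral_nonneg fun x => Real.rpow_nonneg (abs_nonneg _) _
  set lam : ℝ → ℝ := fun t => (A * I t) ^ ((p - (d:ℝ))⁻¹) with hlamdef
  have hlam0 : ∀ t, 0 ≤ lam t := fun t =>
    Real.rpow_nonneg (mul_nonneg hA0.le (hI0 t)) _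
  -- measurability of I and lam
  have hImeas : Measurable I := by
    have hsm : StronglyMeasurable fun z : ℝ × EuclideanSpace ℝ (Fin d) => |b z.1 z.2| ^ p := by
      have : Measurable fun z : ℝ × EuclideanSpace ℝ (Fin d) => |b z.1 z.2| ^ p :=
        (Real.continuous_rpow_const hppos.le).measurable.comp hmeas.abs
      exact this.stronglyMeasurable
    exact hsm.integral_prod_right'.measurable
  have hlammeas : Measurable lam :=
    (Real.continuous_rpow_const (by positivity)).measurable.comp (hImeas.const_mul A)
  -- the decomposition
  refine ⟨fun t x => if lam t ≤ |b t x| then b t x else 0,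
    fun t x => b t x - (if lam t ≤ |b t x| then b t x else 0), ?_, ?_, ?_, ?_, ?_⟩
  · -- measurability of bM
    exact Measurable.ite
      (measurableSet_le (hlammeas.comp measurable_fst) hmeas.abs) hmeas measurable_const
  · -- measurability of bB
    exact hmeas.sub <| Measurable.ite
      (measurableSet_le (hlammeas.comp measurable_fst) hmeas.abs) hmeas measurable_const
  · intro t x; ring
  · -- the Morrey bound
    intro t ht z ρ hρ
    have hb := hLp t ht
    have hdne : (d:ℝ) ≠ 0 := hdpos.ne'
    by_cases hIt : I t = 0
    · -- degenerate case : b t = 0 a.e.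
      have hbz : (fun x => |b t x| ^ p) =ᵐ[volume] 0 := by
        refine (integral_eq_zero_iff_of_nonneg ?_ hb).mp hIt
        exact fun x => Real.rpow_nonneg (abs_nonneg _) _
      have hbz' : ∀ᵐ x : EuclideanSpace ℝ (Fin d),
          |(if lam t ≤ |b t x| then b t x else 0)| ^ (d:ℝ) = 0 := by
        filter_upwards [hbz] with x hx
        have hb0 : b t x = 0 := by
          have : |b t x| ^ p = 0 := hx
          have h2 : |b t x| = 0 := by
            by_contra h3
            exact h3 (by
              have := Real.rpow_eq_zero_iff_of_nonneg (abs_nonneg (b t x)) |>.mp this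
              exact this.1)
          exact abs_eq_zero.mp h2
        simp [hb0, Real.zero_rpow hdne]
      have hJ0 : (∫ x in Metric.ball z ρ,
          |(if lam t ≤ |b t x| then b t x else 0)| ^ (d:ℝ)) = 0 := by
        rw [setIntegral_congr_ae (Metric.isOpen_ball.measurableSet)
          (by filter_upwards [hbz'] with x hx _ using hx)]
        simp
      rw [hJ0, mul_zero, Real.zero_rpow (inv_ne_zero hdne)]
      positivity
    · have hIt' : 0 < I t := (hI0 t).lt_of_ne (Ne.symm hIt)
      have hAI : 0 < A * I t := mul_pos hA0 hIt'
      have hlamt : 0 < lam t := Real.rpow_pos_of_pos hAI _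
      -- pointwise bound on |bM|^d
      have hpt : ∀ x, |(if lam t ≤ |b t x| then b t x else 0)| ^ (d:ℝ)
          ≤ (A * I t)⁻¹ * |b t x| ^ p := by
        intro x
        by_cases h : lam t ≤ |b t x|
        · rw [if_pos h]
          have hbx : 0 < |b t x| := lt_of_lt_of_le hlamt h
          have e1 : |b t x| ^ (d:ℝ) = |b t x| ^ p * |b t x| ^ ((d:ℝ) - p) := by
            rw [← Real.rpow_add hbx]; ring_nf
          have e2 : |b t x| ^ ((d:ℝ) - p) ≤ lam t ^ ((d:ℝ) - p) :=
            Real.rpow_le_rpow_of_nonpos hlamt h (by linarith)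
          have e3 : lam t ^ ((d:ℝ) - p) = (A * I t)⁻¹ := by
            rw [hlamdef]
            show ((A * I t) ^ ((p - (d:ℝ))⁻¹)) ^ ((d:ℝ) - p) = (A * I t)⁻¹
            rw [← Real.rpow_mul hAI.le,
              show (p - (d:ℝ))⁻¹ * ((d:ℝ) - p) = -1 by
                field_simp; ring,
              Real.rpow_neg_one]
          calc |b t x| ^ (d:ℝ) = |b t x| ^ p * |b t x| ^ ((d:ℝ) - p) := e1
            _ ≤ |b t x| ^ p * lam t ^ ((d:ℝ) - p) :=
                mul_le_mul_of_nonneg_left e2 (Real.rpow_nonneg (abs_nonneg _) _)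
            _ = (A * I t)⁻¹ * |b t x| ^ p := by rw [e3]; ring
        · rw [if_neg h, abs_zero, Real.zero_rpow hdne]
          positivity
      -- integrability of |bM|^d on the ball
      have hdom : Integrable (fun x => (A * I t)⁻¹ * |b t x| ^ p) := hb.const_mul _
      have hbMmeas : Measurable fun x : EuclideanSpace ℝ (Fin d) =>
          |(if lam t ≤ |b t x| then b t x else 0)| ^ (d:ℝ) := by
        have hbt : Measurable (b t) := hmeas.of_uncurry_left
        have : Measurable fun x : EuclideanSpace ℝ (Fin d) =>
            (if lam t ≤ |b t x| then b t x else 0) :=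
          Measurable.ite (measurableSet_le measurable_const hbt.abs) hbt measurable_const
        exact (Real.continuous_rpow_const hdpos.le).measurable.comp this.abs
      have hint : IntegrableOn (fun x => |(if lam t ≤ |b t x| then b t x else 0)| ^ (d:ℝ))
          (Metric.ball z ρ) := by
        refine Integrable.mono hdom.integrableOn hbMmeas.aestronglyMeasurable ?_
        filter_upwards with x
        rw [Real.norm_eq_abs, Real.norm_eq_abs,
          abs_of_nonneg (Real.rpow_nonneg (abs_nonneg _) _),
          abs_of_nonneg (mul_nonneg (inv_nonneg.mpr hAI.le)
            (Real.rpow_nonneg (abs_nonneg _) _))]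
        exact hpt x
      -- integral bound
      have h4 : (∫ x in Metric.ball z ρ,
          |(if lam t ≤ |b t x| then b t x else 0)| ^ (d:ℝ)) ≤ α ^ d * c := by
        have step1 : (∫ x in Metric.ball z ρ,
            |(if lam t ≤ |b t x| then b t x else 0)| ^ (d:ℝ))
            ≤ ∫ x in Metric.ball z ρ, (A * I t)⁻¹ * |b t x| ^ p :=
          setIntegral_mono_on hint hdom.integrableOn
            Metric.isOpen_ball.measurableSet (fun x _ => hpt x)
        have step2 : (∫ x in Metric.ball z ρ, (A * I t)⁻¹ * |b t x| ^ p)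
            = (A * I t)⁻¹ * ∫ x in Metric.ball z ρ, |b t x| ^ p := by
          rw [integral_const_mul]
        have step3 : (∫ x in Metric.ball z ρ, |b t x| ^ p) ≤ I t :=
          setIntegral_le_integral hb
            (Filter.Eventually.of_forall fun x => Real.rpow_nonneg (abs_nonneg _) _)
        have step4 : (A * I t)⁻¹ * I t = α ^ d * c := by
          rw [mul_inv, mul_assoc, inv_mul_cancel₀ hIt, mul_one, hA, inv_inv]
        calc (∫ x in Metric.ball z ρ,
            |(if lam t ≤ |b t x| then b t x else 0)| ^ (d:ℝ))
            ≤ (A * I t)⁻¹ * ∫ x in Metric.ball z ρ, |b t x| ^ p := by rw [← step2]; exact step1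
          _ ≤ (A * I t)⁻¹ * I t :=
              mul_le_mul_of_nonneg_left step3 (inv_nonneg.mpr hAI.le)
          _ = α ^ d * c := step4
      -- volume of the ball
      have hvol : (volume (Metric.ball z ρ)).toReal = ρ ^ d * c := by
        rw [Measure.addHaar_ball_of_pos volume z hρ, finrank_euclideanSpace_fin,
          ENNReal.toReal_mul, ENNReal.toReal_ofReal (by positivity)]
      have hvpos : (0:ℝ) < ρ ^ d * c := by positivity
      have hbase : (volume (Metric.ball z ρ)).toReal⁻¹ *
          (∫ x in Metric.ball z ρ, |(if lam t ≤ |b t x| then b t x else 0)| ^ (d:ℝ))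
          ≤ (α * ρ⁻¹) ^ d := by
        rw [hvol]
        calc (ρ ^ d * c)⁻¹ *
            (∫ x in Metric.ball z ρ, |(if lam t ≤ |b t x| then b t x else 0)| ^ (d:ℝ))
            ≤ (ρ ^ d * c)⁻¹ * (α ^ d * c) :=
              mul_le_mul_of_nonneg_left h4 (inv_nonneg.mpr hvpos.le)
          _ = (α * ρ⁻¹) ^ d := by
              field_simp
              rw [← mul_pow]; congr 1; field_simp
      have hbase0 : (0:ℝ) ≤ (volume (Metric.ball z ρ)).toReal⁻¹ *
          ∫ x in Metric.ball z ρ, |(if lam t ≤ |b t x| then b t x else 0)| ^ (d:ℝ) :=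
        mul_nonneg (inv_nonneg.mpr ENNReal.toReal_nonneg)
          (integral_nonneg fun x => Real.rpow_nonneg (abs_nonneg _) _)
      calc ((volume (Metric.ball z ρ)).toReal⁻¹ *
          ∫ x in Metric.ball z ρ, |(if lam t ≤ |b t x| then b t x else 0)| ^ (d:ℝ)) ^ ((d:ℝ)⁻¹)
          ≤ ((α * ρ⁻¹) ^ d) ^ ((d:ℝ)⁻¹) :=
            Real.rpow_le_rpow hbase0 hbase (inv_nonneg.mpr hdpos.le)
        _ = α * ρ⁻¹ := by
            rw [← Real.rpow_natCast (α * ρ⁻¹) d, ← Real.rpow_mul (by positivity),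
              mul_inv_cancel₀ hdne, Real.rpow_one]
  · -- the L² bound
    refine ⟨lam, hlammeas, ?_, ?_⟩
    · -- integrability of lam²
      have hqp : q / p = 2 / (p - (d:ℝ)) := by
        have hq0 : q ≠ 0 := by linarith
        have hp0 : p ≠ 0 := hppos.ne'
        have h1 : (d:ℝ) * q + 2 * p = p * q := by
          field_simp at hcrit
          linarith
        rw [div_eq_div_iff hppos.ne' hpd.ne']
        nlinarith
      have hlamsq : ∀ t, lam t ^ 2 = A ^ (q / p) * I t ^ (q / p) := by
        intro t
        have hAIt : (0:ℝ) ≤ A * I t := mul_nonneg hA0.le (hI0 t)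
        have h1 : lam t ^ 2 = (A * I t) ^ ((p - (d:ℝ))⁻¹ * 2) := by
          rw [hlamdef]
          show ((A * I t) ^ ((p - (d:ℝ))⁻¹)) ^ (2:ℕ) = (A * I t) ^ ((p - (d:ℝ))⁻¹ * 2)
          rw [← Real.rpow_natCast (((A * I t) ^ ((p - (d:ℝ))⁻¹))) 2,
            ← Real.rpow_mul hAIt]
          norm_num
        have h2 : (p - (d:ℝ))⁻¹ * 2 = q / p := by
          rw [hqp]; ring
        rw [h1, h2, Real.mul_rpow hA0.le (hI0 t)]
      have := hLq.const_mul (A ^ (q / p))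
      simp only [hlamsq]; exact this
    · -- the pointwise bound on bB
      intro t ht x
      by_cases h : lam t ≤ |b t x|
      · simp only [if_pos h, sub_self, abs_zero]
        exact hlam0 t
      · simp only [if_neg h, sub_zero]
        exact (not_le.mp h).le
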